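/- If φ and ψ are finite potent endomorphisms of a k-vector space V that commute with each other, and φ + ψ is finite potent, then tr_V(φ + ψ) = tr_V(φ) + tr_V(ψ). (Consequently, in any counter-example to additivity of Tate's trace, the two endomorphisms cannot commute.) -/

import Mathlib

/-- An endomorphism is finite potent if some power has finite-dimensional range. -/
def IsFinitePotent {k V : Type*} [Field k] [AddCommGroup V] [Module k V]
    (φ : V →ₗ[k] V) : Prop :=
  ∃ n : ℕ, FiniteDimensional k (LinearMap.range (φ ^ n))

/-- `c` is a value of Tate's trace of `φ`: the ordinary trace of the restriction of `φ` to
any finite-dimensional `φ`-invariant subspace `W` with `φⁿ V ⊆ W` for some `n` equals `c`. -/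
def TateTraceSpec {k V : Type*} [Field k] [AddCommGroup V] [Module k V]
    (φ : V →ₗ[k] V) (c : k) : Prop :=
  ∀ (W : Submodule k V) (hW : ∀ x ∈ W, φ x ∈ W), FiniteDimensional k W →
    (∃ n : ℕ, LinearMap.range (φ ^ n) ≤ W) →
    LinearMap.trace k W (φ.restrict hW) = c

open Classical in
/-- Tate's trace of a finite potent endomorphism. -/
noncomputable def tateTrace {k V : Type*} [Field k] [AddCommGroup V] [Module k V]
    (φ : V →ₗ[k] V) : k :=
  if h : ∃ c, TateTraceSpec φ c then h.choose else 0

section Aux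

variable {k V : Type*} [Field k] [AddCommGroup V] [Module k V]

open LinearMap Submodule

/-- Key lemma: the trace is the same on nested admissible subspaces. -/
lemma aux_trace_eq_of_le (φ : V →ₗ[k] V) (W₁ W₂ : Submodule k V) (h12 : W₁ ≤ W₂)
    (hW₁ : ∀ x ∈ W₁, φ x ∈ W₁) (hW₂ : ∀ x ∈ W₂, φ x ∈ W₂)
    [FiniteDimensional k W₂]
    (n : ℕ) (hn : LinearMap.range (φ ^ n) ≤ W₁) :
    LinearMap.trace k W₁ (φ.restrict hW₁) = LinearMap.trace k W₂ (φ.restrict hW₂) := by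
  set f : W₂ →ₗ[k] W₂ := φ.restrict hW₂ with hf
  set U : Submodule k W₂ := W₁.comap W₂.subtype with hU
  have hfU : ∀ x ∈ U, f x ∈ U := by
    intro x hx
    simpa [hU, hf, LinearMap.restrict_apply] using hW₁ _ hx
  obtain ⟨C, hC⟩ := Submodule.exists_isCompl U
  set q : W₂ →ₗ[k] W₂ := U.subtype ∘ₗ (U.linearProjOfIsCompl C hC) with hq
  have hqU : ∀ x ∈ U, q x = x := fun x hx => by
    simp [hq]
    exact congrArg Subtype.val (Submodule.projectionOnto_apply_left hC ⟨x, hx⟩)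
  have hq_mem : ∀ x, q x ∈ U := fun x => (U.linearProjOfIsCompl C hC x).2
  -- decomposition
  have hdec : f = f ∘ₗ q + f ∘ₗ (LinearMap.id - q) := by
    rw [LinearMap.comp_sub]
    simp
  -- the nilpotent part has trace zero
  have hfn : ∀ x : W₂, (f ^ n) x ∈ U := by
    intro x
    have hpow : (φ ^ n).restrict (fun x hx => by
        have : (φ ^ n) x ∈ LinearMap.range (φ ^ n) := LinearMap.mem_range_self _ x
        exact h12 (hn this)) = f ^ n := (Module.End.pow_restrict n hW₂).symm
    have hx : (((f ^ n) x : W₂) : V) = (φ ^ n) (x : V) := by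
      rw [← hpow, LinearMap.restrict_apply]
    show (((f ^ n) x : W₂) : V) ∈ W₁
    rw [hx]
    exact hn (LinearMap.mem_range_self _ _)
  set g : W₂ →ₗ[k] W₂ := (LinearMap.id - q) ∘ₗ f with hg
  have hdiff : ∀ (m : ℕ) (x : W₂), (f ^ m) x - (g ^ m) x ∈ U := by
    intro m
    induction m with
    | zero => intro x; simp
    | succ m ih =>
      intro x
      have h1 : (f ^ (m+1)) x = f ((f ^ m) x) := by rw [pow_succ']; rfl
      have h2 : (g ^ (m+1)) x = g ((g ^ m) x) := by rw [pow_succ']; rfl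
      have heq : (f ^ (m+1)) x - (g ^ (m+1)) x
          = f ((f ^ m) x - (g ^ m) x) + q (f ((g ^ m) x)) := by
        rw [h1, h2]
        simp only [hg, LinearMap.comp_apply, LinearMap.sub_apply, LinearMap.id_apply, map_sub]
        abel
      rw [heq]
      exact U.add_mem (hfU _ (ih x)) (hq_mem _)
  have hgU : ∀ x : W₂, (g ^ n) x ∈ U := by
    intro x
    have heq : (g ^ n) x = (f ^ n) x - ((f ^ n) x - (g ^ n) x) := by abel
    rw [heq]
    exact U.sub_mem (hfn x) (hdiff n x)
  have hgnil : g ^ (n + 1) = 0 := by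
    ext x
    have h1 : (g ^ (n+1)) x = g ((g ^ n) x) := by rw [pow_succ']; rfl
    rw [h1]
    have hmem : f ((g ^ n) x) ∈ U := hfU _ (hgU x)
    simp only [hg] at hmem ⊢
    simp [LinearMap.sub_apply, hqU _ hmem]
  have htr0 : LinearMap.trace k W₂ (f ∘ₗ (LinearMap.id - q)) = 0 := by
    have hcomm : LinearMap.trace k W₂ (f ∘ₗ (LinearMap.id - q))
        = LinearMap.trace k W₂ ((LinearMap.id - q) ∘ₗ f) := by
      rw [← Module.End.mul_eq_comp, ← Module.End.mul_eq_comp, LinearMap.trace_mul_comm]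
    rw [hcomm]
    have hnil : IsNilpotent ((LinearMap.id - q) ∘ₗ f) := ⟨n + 1, hgnil⟩
    exact (LinearMap.isNilpotent_trace_of_isNilpotent hnil).eq_zero
  -- the projected part has the trace of the small space
  have hval : ∀ x, (f ∘ₗ q) x ∈ U := fun x => hfU _ (hq_mem x)
  have htr1 : LinearMap.trace k U ((f ∘ₗ q).restrict (fun x _ => hval x))
      = LinearMap.trace k W₂ (f ∘ₗ q) :=
    LinearMap.trace_restrict_eq_of_forall_mem U (f ∘ₗ q) hval
  set e : U ≃ₗ[k] W₁ := Submodule.comapSubtypeEquivOfLe h12 with he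
  have hconj : φ.restrict hW₁ = e.conj ((f ∘ₗ q).restrict (fun x _ => hval x)) := by
    ext x
    rcases x with ⟨x, hx⟩
    have hxm : (⟨x, h12 hx⟩ : W₂) ∈ U := hx
    have hsymm : e.symm ⟨x, hx⟩ = ⟨⟨x, h12 hx⟩, hxm⟩ := by
      rw [LinearEquiv.symm_apply_eq]
      apply Subtype.ext
      simp only [he]
      exact (Submodule.comapSubtypeEquivOfLe_apply_coe h12 ⟨⟨x, h12 hx⟩, hxm⟩).symm
    simp only [LinearEquiv.conj_apply, LinearMap.comp_apply, LinearEquiv.coe_coe]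
    rw [LinearMap.restrict_apply]
    rw [hsymm, LinearMap.restrict_apply]
    have hqx : q ⟨x, h12 hx⟩ = ⟨x, h12 hx⟩ := hqU _ hxm
    rw [Submodule.comapSubtypeEquivOfLe_apply_coe]
    simp [hqx, hf, LinearMap.restrict_apply]
  calc LinearMap.trace k W₁ (φ.restrict hW₁)
      = LinearMap.trace k U ((f ∘ₗ q).restrict (fun x _ => hval x)) := by
        rw [hconj, LinearMap.trace_conj']
    _ = LinearMap.trace k W₂ (f ∘ₗ q) := htr1
    _ = LinearMap.trace k W₂ f := by
        conv_rhs => rw [hdec]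
        rw [map_add, htr0, add_zero]

lemma aux_range_inv (φ g : V →ₗ[k] V) (h : Commute φ g) :
    ∀ x ∈ LinearMap.range g, φ x ∈ LinearMap.range g := by
  rintro _ ⟨y, rfl⟩
  refine ⟨φ y, ?_⟩
  have := congrArg (fun f : V →ₗ[k] V => f y) h
  simpa [Module.End.mul_eq_comp] using this.symm

lemma aux_invariant_range_pow (φ : V →ₗ[k] V) (n : ℕ) :
    ∀ x ∈ LinearMap.range (φ ^ n), φ x ∈ LinearMap.range (φ ^ n) :=
  aux_range_inv φ (φ ^ n) (Commute.pow_right rfl n)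

lemma aux_sup_inv (φ : V →ₗ[k] V) (p q : Submodule k V)
    (hp : ∀ x ∈ p, φ x ∈ p) (hq : ∀ x ∈ q, φ x ∈ q) :
    ∀ x ∈ p ⊔ q, φ x ∈ p ⊔ q := by
  intro x hx
  rcases Submodule.mem_sup.mp hx with ⟨y, hy, z, hz, rfl⟩
  rw [map_add]
  exact Submodule.add_mem _ (Submodule.mem_sup_left (hp y hy))
    (Submodule.mem_sup_right (hq z hz))

lemma aux_exists_spec (φ : V →ₗ[k] V) (hφ : IsFinitePotent φ) :
    ∃ c, TateTraceSpec φ c := by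
  obtain ⟨n, hn⟩ := hφ
  haveI := hn
  set W₀ := LinearMap.range (φ ^ n) with hW₀
  have hinv := aux_invariant_range_pow φ n
  refine ⟨LinearMap.trace k W₀ (φ.restrict hinv), ?_⟩
  intro W hW hWfd hr
  obtain ⟨m, hm⟩ := hr
  haveI := hWfd
  set W' := W₀ ⊔ W with hW'
  have hinv' : ∀ x ∈ W', φ x ∈ W' := aux_sup_inv φ W₀ W hinv hW
  haveI : FiniteDimensional k W' := Submodule.finiteDimensional_sup W₀ W
  have h1 : LinearMap.trace k W₀ (φ.restrict hinv) = LinearMap.trace k W' (φ.restrict hinv') :=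
    aux_trace_eq_of_le φ W₀ W' le_sup_left hinv hinv' n le_rfl
  have h2 : LinearMap.trace k W (φ.restrict hW) = LinearMap.trace k W' (φ.restrict hinv') :=
    aux_trace_eq_of_le φ W W' le_sup_right hW hinv' m hm
  rw [h1, h2]

lemma aux_tateTrace_eq (φ : V →ₗ[k] V) (hφ : IsFinitePotent φ)
    (W : Submodule k V) (hW : ∀ x ∈ W, φ x ∈ W) (hfd : FiniteDimensional k W)
    (hr : ∃ n, LinearMap.range (φ ^ n) ≤ W) :
    tateTrace φ = LinearMap.trace k W (φ.restrict hW) := by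
  have h := aux_exists_spec φ hφ
  rw [tateTrace, dif_pos h]
  exact (h.choose_spec W hW hfd hr).symm

end Aux

theorem tateTrace_add_of_commute
    {k V : Type*} [Field k] [AddCommGroup V] [Module k V]
    (φ ψ : V →ₗ[k] V) (hφ : IsFinitePotent φ) (hψ : IsFinitePotent ψ)
    (hcomm : Commute φ ψ) (hsum : IsFinitePotent (φ + ψ)) :
    tateTrace (φ + ψ) = tateTrace φ + tateTrace ψ := by
  obtain ⟨n, hn⟩ := hφ
  obtain ⟨m, hm⟩ := hψ
  haveI := hn; haveI := hm
  set W : Submodule k V := LinearMap.range (φ ^ n) ⊔ LinearMap.range (ψ ^ m) with hWdef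
  haveI : FiniteDimensional k W := Submodule.finiteDimensional_sup _ _
  -- invariance facts
  have hinvφ : ∀ x ∈ W, φ x ∈ W :=
    aux_sup_inv φ _ _ (aux_invariant_range_pow φ n) (aux_range_inv φ (ψ ^ m) (hcomm.pow_right m))
  have hinvψ : ∀ x ∈ W, ψ x ∈ W :=
    aux_sup_inv ψ _ _ (aux_range_inv ψ (φ ^ n) (hcomm.symm.pow_right n))
      (aux_invariant_range_pow ψ m)
  have hinvs : ∀ x ∈ W, (φ + ψ) x ∈ W := by
    intro x hx
    rw [LinearMap.add_apply]
    exact W.add_mem (hinvφ x hx) (hinvψ x hx)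
  -- the sum power lands in W
  have hrs : LinearMap.range ((φ + ψ) ^ (n + m)) ≤ W := by
    rintro _ ⟨y, rfl⟩
    rw [hcomm.add_pow, LinearMap.sum_apply]
    refine Submodule.sum_mem _ (fun i hi => ?_)
    rcases le_or_gt n i with h | h
    · have hpow : φ ^ i = φ ^ n * φ ^ (i - n) := by
        rw [← pow_add, Nat.add_sub_cancel' h]
      have heq : φ ^ i * ψ ^ (n + m - i) * (((n+m).choose i : ℕ) : V →ₗ[k] V)
          = (φ ^ n) ∘ₗ (φ ^ (i - n) * ψ ^ (n + m - i) * (((n+m).choose i : ℕ) : V →ₗ[k] V)) := by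
        rw [← Module.End.mul_eq_comp, hpow]
        simp only [mul_assoc]
      rw [heq, LinearMap.comp_apply]
      exact Submodule.mem_sup_left (LinearMap.mem_range_self _ _)
    · have hcc : Commute (φ ^ i) (ψ ^ m) := (hcomm.pow_right m).pow_left i
      have hj : ψ ^ (n + m - i) = ψ ^ m * ψ ^ (n + m - i - m) := by
        rw [← pow_add]
        congr 1
        omega
      have heq : φ ^ i * ψ ^ (n + m - i) * (((n+m).choose i : ℕ) : V →ₗ[k] V)
          = (ψ ^ m) ∘ₗ (φ ^ i * ψ ^ (n + m - i - m) * (((n+m).choose i : ℕ) : V →ₗ[k] V)) := by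
        rw [← Module.End.mul_eq_comp, hj]
        simp only [mul_assoc]
        rw [← mul_assoc, hcc.eq, mul_assoc]
      rw [heq, LinearMap.comp_apply]
      exact Submodule.mem_sup_right (LinearMap.mem_range_self _ _)
  have hrφ : LinearMap.range (φ ^ n) ≤ W := le_sup_left
  have hrψ : LinearMap.range (ψ ^ m) ≤ W := le_sup_right
  rw [aux_tateTrace_eq (φ + ψ) hsum W hinvs inferInstance ⟨n + m, hrs⟩,
    aux_tateTrace_eq φ ⟨n, hn⟩ W hinvφ inferInstance ⟨n, hrφ⟩,
    aux_tateTrace_eq ψ ⟨m, hm⟩ W hinvψ inferInstance ⟨m, hrψ⟩]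
  have hres : (φ + ψ).restrict hinvs = φ.restrict hinvφ + ψ.restrict hinvψ := by
    ext x
    simp [LinearMap.restrict_apply]
  rw [hres, map_add]
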